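/- Let f : [0,1] → [0,1] be continuous and strictly decreasing with f(0) = 1, and let K ≥ 10 be an integer. Then the supremum, over all instances (all n ≥ 1 and 1 ≥ x_1 ≥ x_2 ≥ … ≥ x_n ≥ 0), of the regret of the best-only pricing curve with threshold f is equal to the supremum of the same quantity restricted to instances with n ≥ K and x_n ≥ f(1). -/

import Mathlib

open MeasureTheory

/-- The value received by the best-only pricing-curve algorithm with threshold function `f`
on the instance `x`, when value `x i` arrives at time `t i`: it accepts (and receives) the
value `x i` with the smallest arrival time among all indices `i` satisfying both
`x i ≥ f (t i)` and `x i > x j` for every `j` arriving before `i`; it receives `0` if no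
index qualifies. -/
noncomputable def bestOnlyReceived {n : ℕ} (f : ℝ → ℝ) (x t : Fin n → ℝ) : ℝ :=
  if h : (Finset.univ.filter fun i : Fin n =>
      f (t i) ≤ x i ∧ ∀ j, t j < t i → x j < x i).Nonempty then
    x (Classical.choose (Finset.exists_min_image _ t h))
  else 0

/-- The regret of the best-only pricing curve with threshold function `f` on the instance
`x 0 ≥ x 1 ≥ … ≥ x n`: the top value `x 0` minus the expected received value, where the
arrival times are i.i.d. uniform on `[0,1]`. -/
noncomputable def bestOnlyRegret {n : ℕ} (f : ℝ → ℝ) (x : Fin (n + 1) → ℝ) : ℝ :=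
  x 0 - ∫ t in Set.univ.pi (fun _ : Fin (n + 1) => Set.Icc (0 : ℝ) 1), bestOnlyReceived f x t

namespace BOaux

/-- The unit cube. -/
def cube (N : ℕ) : Set (Fin N → ℝ) := Set.univ.pi fun _ : Fin N => Set.Icc (0 : ℝ) 1

lemma cube_measurableSet (N : ℕ) : MeasurableSet (cube N) :=
  MeasurableSet.univ_pi fun _ => measurableSet_Icc

lemma mem_cube {N : ℕ} {t : Fin N → ℝ} : t ∈ cube N ↔ ∀ i, 0 ≤ t i ∧ t i ≤ 1 := by
  rw [cube, Set.mem_univ_pi]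
  simp only [Set.mem_Icc]

lemma volume_cube (N : ℕ) : volume (cube N) = 1 := by
  rw [cube, volume_pi_pi]
  simp [Real.volume_Icc]

lemma recv_pos {N : ℕ} (f : ℝ → ℝ) (x t : Fin N → ℝ)
    (h : (Finset.univ.filter fun i : Fin N =>
      f (t i) ≤ x i ∧ ∀ j, t j < t i → x j < x i).Nonempty) :
    bestOnlyReceived f x t = x (Classical.choose (Finset.exists_min_image _ t h)) :=
  dif_pos h

lemma recv_neg {N : ℕ} (f : ℝ → ℝ) (x t : Fin N → ℝ)
    (h : ¬ (Finset.univ.filter fun i : Fin N =>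
      f (t i) ≤ x i ∧ ∀ j, t j < t i → x j < x i).Nonempty) :
    bestOnlyReceived f x t = 0 :=
  dif_neg h

/-- nonnegativity of the received value -/
lemma recv_nonneg {N : ℕ} (f : ℝ → ℝ) (x : Fin N → ℝ) (hx : ∀ i, 0 ≤ x i)
    (t : Fin N → ℝ) : 0 ≤ bestOnlyReceived f x t := by
  unfold bestOnlyReceived
  split
  · exact hx _
  · exact le_rfl

lemma regret_le_one {n : ℕ} (f : ℝ → ℝ) (x : Fin (n + 1) → ℝ) (hx1 : x 0 ≤ 1)
    (hx : ∀ i, 0 ≤ x i) : bestOnlyRegret f x ≤ 1 := by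
  have h : 0 ≤ ∫ t in Set.univ.pi (fun _ : Fin (n + 1) => Set.Icc (0 : ℝ) 1),
      bestOnlyReceived f x t :=
    setIntegral_nonneg (cube_measurableSet (n + 1)) fun t _ => recv_nonneg f x hx t
  unfold bestOnlyRegret
  linarith

/-- The key combinatorial lemma: padding the instance with values `c = f 1` (and raising
values below `c` up to `c`) does not change the received value, for generic arrival times. -/
lemma core {n' m' : ℕ} (h : n' ≤ m') (f : ℝ → ℝ) (c : ℝ)
    (hf : ∀ s : ℝ, 0 ≤ s → s < 1 → c < f s)
    (x : Fin n' → ℝ) (y : Fin m' → ℝ)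
    (hy : ∀ i : Fin m', y i = if h2 : (i : ℕ) < n' then max (x ⟨i, h2⟩) c else c)
    (t : Fin m' → ℝ) (ht0 : ∀ i, 0 ≤ t i) (ht1 : ∀ i, t i < 1)
    (htinj : Function.Injective t) :
    bestOnlyReceived f y t = bestOnlyReceived f x (t ∘ Fin.castLE h) := by
  have hcf : ∀ i : Fin m', c < f (t i) := fun i => hf _ (ht0 i) (ht1 i)
  have hyval : ∀ i0 : Fin n', y (Fin.castLE h i0) = max (x i0) c := by
    intro i0
    have h2 : ((Fin.castLE h i0 : Fin m') : ℕ) < n' := by simp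
    rw [hy, dif_pos h2]
    have h3 : (⟨((Fin.castLE h i0 : Fin m') : ℕ), h2⟩ : Fin n') = i0 := Fin.ext (by simp)
    rw [h3]
  have hyc : ∀ i : Fin m', ¬ ((i : ℕ) < n') → y i = c := fun i hi => by rw [hy, dif_neg hi]
  have hmemb : ∀ i : Fin m',
      (f (t i) ≤ y i ∧ ∀ j, t j < t i → y j < y i) ↔
      ∃ i0 : Fin n', (f (t (Fin.castLE h i0)) ≤ x i0 ∧
        ∀ j0, t (Fin.castLE h j0) < t (Fin.castLE h i0) → x j0 < x i0) ∧
          Fin.castLE h i0 = i := by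
    intro i
    constructor
    · rintro ⟨h1, h2⟩
      by_cases hi : (i : ℕ) < n'
      · have hie : Fin.castLE h (⟨i, hi⟩ : Fin n') = i := Fin.ext (by simp)
        have hyi : y i = max (x ⟨i, hi⟩) c := by
          conv_lhs => rw [← hie]
          exact hyval _
        have hx1 : f (t i) ≤ x ⟨i, hi⟩ := by
          rw [hyi] at h1
          rcases le_max_iff.1 h1 with hh | hh
          · exact hh
          · exact absurd hh (not_le.2 (hcf i))
        have hxc : c < x ⟨i, hi⟩ := lt_of_lt_of_le (hcf i) hx1
        refine ⟨⟨i, hi⟩, ⟨by rw [hie]; exact hx1, fun j0 hj0 => ?_⟩, hie⟩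
        have hblock := h2 (Fin.castLE h j0) (by rw [hie] at hj0; exact hj0)
        rw [hyval j0, hyi, max_eq_left hxc.le] at hblock
        exact lt_of_le_of_lt (le_max_left _ _) hblock
      · exfalso
        rw [hyc i hi] at h1
        exact absurd h1 (not_le.2 (hcf i))
    · rintro ⟨i0, ⟨hx1, hx2⟩, rfl⟩
      have hxc : c < x i0 := lt_of_lt_of_le (hcf _) hx1
      refine ⟨by rw [hyval]; exact le_trans hx1 (le_max_left _ _), fun j hj => ?_⟩
      rw [hyval, max_eq_left hxc.le]
      by_cases hjlt : (j : ℕ) < n'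
      · have hje : Fin.castLE h (⟨j, hjlt⟩ : Fin n') = j := Fin.ext (by simp)
        have hb := hx2 ⟨j, hjlt⟩ (by rw [hje]; exact hj)
        have hyj : y j = max (x ⟨j, hjlt⟩) c := by
          conv_lhs => rw [← hje]
          exact hyval _
        rw [hyj]
        exact max_lt hb hxc
      · rw [hyc j hjlt]
        exact hxc
  have hmem : ∀ i : Fin m',
      (i ∈ Finset.univ.filter fun i : Fin m' =>
          f (t i) ≤ y i ∧ ∀ j, t j < t i → y j < y i) ↔
      ∃ i0 ∈ (Finset.univ.filter fun i0 : Fin n' =>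
          f ((t ∘ Fin.castLE h) i0) ≤ x i0 ∧
            ∀ j, (t ∘ Fin.castLE h) j < (t ∘ Fin.castLE h) i0 → x j < x i0),
        Fin.castLE h i0 = i := by
    intro i
    simp only [Finset.mem_filter, Finset.mem_univ, true_and, Function.comp_apply]
    exact hmemb i
  by_cases hne : (Finset.univ.filter fun i0 : Fin n' =>
      f ((t ∘ Fin.castLE h) i0) ≤ x i0 ∧
        ∀ j, (t ∘ Fin.castLE h) j < (t ∘ Fin.castLE h) i0 → x j < x i0).Nonempty
  · have hney : (Finset.univ.filter fun i : Fin m' =>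
        f (t i) ≤ y i ∧ ∀ j, t j < t i → y j < y i).Nonempty := by
      obtain ⟨i0, hi0⟩ := hne
      exact ⟨Fin.castLE h i0, (hmem _).2 ⟨i0, hi0, rfl⟩⟩
    rw [recv_pos f y t hney, recv_pos f x (t ∘ Fin.castLE h) hne]
    set iY := Classical.choose (Finset.exists_min_image
      (Finset.univ.filter fun i : Fin m' =>
        f (t i) ≤ y i ∧ ∀ j, t j < t i → y j < y i) t hney) with hiY
    set iX := Classical.choose (Finset.exists_min_image
      (Finset.univ.filter fun i0 : Fin n' =>
        f ((t ∘ Fin.castLE h) i0) ≤ x i0 ∧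
          ∀ j, (t ∘ Fin.castLE h) j < (t ∘ Fin.castLE h) i0 → x j < x i0)
      (t ∘ Fin.castLE h) hne) with hiX
    obtain ⟨hmemY, hminY⟩ := Classical.choose_spec (Finset.exists_min_image
      (Finset.univ.filter fun i : Fin m' =>
        f (t i) ≤ y i ∧ ∀ j, t j < t i → y j < y i) t hney)
    obtain ⟨hmemX, hminX⟩ := Classical.choose_spec (Finset.exists_min_image
      (Finset.univ.filter fun i0 : Fin n' =>
        f ((t ∘ Fin.castLE h) i0) ≤ x i0 ∧
          ∀ j, (t ∘ Fin.castLE h) j < (t ∘ Fin.castLE h) i0 → x j < x i0)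
      (t ∘ Fin.castLE h) hne)
    rw [← hiY] at hmemY hminY
    rw [← hiX] at hmemX hminX
    obtain ⟨i1, hi1, hi1e⟩ := (hmem iY).1 hmemY
    have h1 : t iY ≤ t (Fin.castLE h iX) := hminY _ ((hmem _).2 ⟨iX, hmemX, rfl⟩)
    have h2 : (t ∘ Fin.castLE h) iX ≤ (t ∘ Fin.castLE h) i1 := hminX _ hi1
    have h3 : t iY = t (Fin.castLE h iX) := by
      simp only [Function.comp_apply] at h2
      rw [hi1e] at h2
      exact le_antisymm h1 h2
    have h4 : iY = Fin.castLE h iX := htinj h3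
    have hx1 : f ((t ∘ Fin.castLE h) iX) ≤ x iX := (Finset.mem_filter.1 hmemX).2.1
    have hxc : c < x iX := lt_of_lt_of_le (hcf _) hx1
    rw [h4, hyval, max_eq_left hxc.le]
  · have hney : ¬ (Finset.univ.filter fun i : Fin m' =>
        f (t i) ≤ y i ∧ ∀ j, t j < t i → y j < y i).Nonempty := by
      rintro ⟨i, hi⟩
      obtain ⟨i0, hi0, _⟩ := (hmem i).1 hi
      exact hne ⟨i0, hi0⟩
    rw [recv_neg f y t hney, recv_neg f x (t ∘ Fin.castLE h) hne]

/-- the acceptance condition as a set -/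
def Cond {N : ℕ} (F : ℝ → ℝ) (x : Fin N → ℝ) (i : Fin N) : Set (Fin N → ℝ) :=
  {s | F (s i) ≤ x i ∧ ∀ j, s j < s i → x j < x i}

def Win {N : ℕ} (F : ℝ → ℝ) (x : Fin N → ℝ) (i : Fin N) : Set (Fin N → ℝ) :=
  Cond F x i ∩ {s | ∀ j, j ≠ i → s ∈ Cond F x j → s i < s j}

lemma measurable_cond {N : ℕ} {F : ℝ → ℝ} (hF : Measurable F) (x : Fin N → ℝ) (i : Fin N) :
    MeasurableSet (Cond F x i) := by
  have h1 : Cond F x i = {s : Fin N → ℝ | F (s i) ≤ x i} ∩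
      ⋂ j, ({s : Fin N → ℝ | s j < s i}ᶜ ∪ {_s : Fin N → ℝ | x j < x i}) := by
    ext s
    simp only [Cond, Set.mem_setOf_eq, Set.mem_inter_iff, Set.mem_iInter, Set.mem_union,
      Set.mem_compl_iff]
    constructor
    · rintro ⟨h1, h2⟩
      refine ⟨h1, fun j => ?_⟩
      by_cases hj : s j < s i
      · exact Or.inr (h2 j hj)
      · exact Or.inl hj
    · rintro ⟨h1, h2⟩
      refine ⟨h1, fun j hj => ?_⟩
      rcases h2 j with hc | hc
      · exact absurd hj hc
      · exact hc
  rw [h1]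
  refine MeasurableSet.inter (measurableSet_le (hF.comp (measurable_pi_apply i))
    measurable_const) (MeasurableSet.iInter fun j => ?_)
  exact ((measurableSet_lt (measurable_pi_apply j) (measurable_pi_apply i)).compl).union
    (MeasurableSet.const _)

lemma measurable_win {N : ℕ} {F : ℝ → ℝ} (hF : Measurable F) (x : Fin N → ℝ) (i : Fin N) :
    MeasurableSet (Win F x i) := by
  have h1 : {s : Fin N → ℝ | ∀ j, j ≠ i → s ∈ Cond F x j → s i < s j} =
      ⋂ j, ({_s : Fin N → ℝ | j = i} ∪ ((Cond F x j)ᶜ ∪ {s : Fin N → ℝ | s i < s j})) := by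
    ext s
    simp only [Set.mem_setOf_eq, Set.mem_iInter, Set.mem_union, Set.mem_compl_iff]
    constructor
    · intro hs j
      by_cases hj : j = i
      · exact Or.inl hj
      · by_cases hc : s ∈ Cond F x j
        · exact Or.inr (Or.inr (hs j hj hc))
        · exact Or.inr (Or.inl hc)
    · intro hs j hj hc
      rcases hs j with h | h | h
      · exact absurd h hj
      · exact absurd hc h
      · exact h
  refine (measurable_cond hF x i).inter ?_
  rw [h1]
  refine MeasurableSet.iInter fun j => (MeasurableSet.const _).union
    (((measurable_cond hF x j).compl).union
      (measurableSet_lt (measurable_pi_apply i) (measurable_pi_apply j)))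

/-- the received value as a sum of indicators, for generic times -/
lemma recv_eq_sum {N : ℕ} (f F : ℝ → ℝ) (x t : Fin N → ℝ) (hFt : ∀ i, F (t i) = f (t i))
    (htinj : Function.Injective t) :
    bestOnlyReceived f x t = ∑ i, (Win F x i).indicator (fun _ => x i) t := by
  have hcond : ∀ i : Fin N, t ∈ Cond F x i ↔
      (f (t i) ≤ x i ∧ ∀ j, t j < t i → x j < x i) := by
    intro i
    simp only [Cond, Set.mem_setOf_eq, hFt i]
  by_cases hne : (Finset.univ.filter fun i : Fin N =>
      f (t i) ≤ x i ∧ ∀ j, t j < t i → x j < x i).Nonempty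
  · rw [recv_pos f x t hne]
    set i0 := Classical.choose (Finset.exists_min_image
      (Finset.univ.filter fun i : Fin N =>
        f (t i) ≤ x i ∧ ∀ j, t j < t i → x j < x i) t hne) with hi0
    obtain ⟨hmem, hmin⟩ := Classical.choose_spec (Finset.exists_min_image
      (Finset.univ.filter fun i : Fin N =>
        f (t i) ≤ x i ∧ ∀ j, t j < t i → x j < x i) t hne)
    rw [← hi0] at hmem hmin
    rw [Finset.mem_filter] at hmem
    have hwin : t ∈ Win F x i0 := by
      refine ⟨(hcond i0).2 hmem.2, fun j hj hcj => ?_⟩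
      have hjf : j ∈ Finset.univ.filter fun i : Fin N =>
          f (t i) ≤ x i ∧ ∀ j, t j < t i → x j < x i := by
        rw [Finset.mem_filter]
        exact ⟨Finset.mem_univ j, (hcond j).1 hcj⟩
      exact lt_of_le_of_ne (hmin j hjf) fun heq => hj (htinj heq.symm)
    have hnot : ∀ i : Fin N, i ≠ i0 → t ∉ Win F x i := by
      rintro i hne' ⟨hci, hmini⟩
      have hif : i ∈ Finset.univ.filter fun i : Fin N =>
          f (t i) ≤ x i ∧ ∀ j, t j < t i → x j < x i := by
        rw [Finset.mem_filter]
        exact ⟨Finset.mem_univ i, (hcond i).1 hci⟩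
      have h1 : t i0 ≤ t i := hmin i hif
      have h2 : t i < t i0 := hmini i0 (Ne.symm hne') hwin.1
      linarith
    rw [Finset.sum_eq_single i0]
    · rw [Set.indicator_of_mem hwin]
    · intro b _ hb
      rw [Set.indicator_of_notMem (hnot b hb)]
    · intro hb
      exact absurd (Finset.mem_univ i0) hb
  · rw [recv_neg f x t hne]
    symm
    apply Finset.sum_eq_zero
    intro i _
    apply Set.indicator_of_notMem
    intro hwin
    apply hne
    refine ⟨i, ?_⟩
    rw [Finset.mem_filter]
    exact ⟨Finset.mem_univ i, (hcond i).1 hwin.1⟩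

/-- a.e. genericity of the arrival times -/
lemma ae_generic (N : ℕ) :
    ∀ᵐ t : Fin N → ℝ ∂(volume.restrict (cube N)),
      Function.Injective t ∧ ∀ i, t i < 1 := by
  have h1 : ∀ i : Fin N, ∀ᵐ t : Fin N → ℝ, t i ≠ 1 := by
    intro i
    rw [volume_pi]
    exact Measure.ae_eval_ne _ i 1
  have h2 : ∀ i j : Fin N, i ≠ j → ∀ᵐ t : Fin N → ℝ, t i ≠ t j := by
    intro i j hij
    rw [Filter.Eventually, mem_ae_iff]
    have hset : {t : Fin N → ℝ | t i ≠ t j}ᶜ =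
        (LinearMap.ker ((LinearMap.proj i : (Fin N → ℝ) →ₗ[ℝ] ℝ) - LinearMap.proj j) :
          Set (Fin N → ℝ)) := by
      ext t
      simp only [Set.mem_compl_iff, Set.mem_setOf_eq, not_not, SetLike.mem_coe,
        LinearMap.mem_ker, LinearMap.sub_apply, LinearMap.proj_apply, sub_eq_zero]
    rw [hset]
    apply Measure.addHaar_submodule
    intro htop
    have hmem : Pi.single j (1 : ℝ) ∈
        LinearMap.ker ((LinearMap.proj i : (Fin N → ℝ) →ₗ[ℝ] ℝ) - LinearMap.proj j) := by
      rw [htop]; trivial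
    rw [LinearMap.mem_ker, LinearMap.sub_apply, LinearMap.proj_apply, LinearMap.proj_apply,
      Pi.single_eq_same, Pi.single_eq_of_ne hij] at hmem
    norm_num at hmem
  have hae : ∀ᵐ t : Fin N → ℝ, (∀ i j : Fin N, i ≠ j → t i ≠ t j) ∧ ∀ i, t i ≠ 1 := by
    refine Filter.Eventually.and ?_ (ae_all_iff.2 h1)
    rw [ae_all_iff]
    intro i
    rw [ae_all_iff]
    intro j
    by_cases hij : i = j
    · subst hij
      exact Filter.Eventually.of_forall fun t hcon => absurd rfl hcon
    · exact (h2 i j hij).mono fun t h _ => h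
  filter_upwards [ae_restrict_of_ae hae, ae_restrict_mem (cube_measurableSet N)]
    with t ht htc
  refine ⟨fun a b hab => ?_, fun i => ?_⟩
  · by_contra hcon
    exact ht.1 a b hcon hab
  · exact lt_of_le_of_ne ((mem_cube.1 htc) i).2 (ht.2 i)

/-- adding `k` dummy coordinates does not change the integral -/
lemma pad_integral {n' k N : ℕ} (e : Fin n' ⊕ Fin k ≃ Fin N)
    (g : (Fin n' → ℝ) → ℝ) (hg : AEStronglyMeasurable g (volume.restrict (cube n'))) :
    ∫ t in cube N, g (fun i => t (e (Sum.inl i))) = ∫ u in cube n', g u := by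
  set φ : ((Fin n' → ℝ) × (Fin k → ℝ)) → (Fin N → ℝ) := fun p =>
    Equiv.piCongrLeft (fun _ : Fin N => ℝ) e
      ((Equiv.sumPiEquivProdPi fun _ : Fin n' ⊕ Fin k => ℝ).symm p) with hφ
  have hco : φ = (⇑(MeasurableEquiv.piCongrLeft (fun _ : Fin N => ℝ) e)) ∘
      (⇑(MeasurableEquiv.sumPiEquivProdPi (fun _ : Fin n' ⊕ Fin k => ℝ)).symm) := rfl
  have hmp : MeasurePreserving φ volume volume := by
    rw [hco]
    exact (volume_measurePreserving_piCongrLeft (fun _ : Fin N => ℝ) e).comp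
      (volume_measurePreserving_sumPiEquivProdPi_symm (fun _ : Fin n' ⊕ Fin k => ℝ))
  have hemb : MeasurableEmbedding φ := by
    rw [hco]
    exact (MeasurableEquiv.piCongrLeft (fun _ : Fin N => ℝ) e).measurableEmbedding.comp
      (MeasurableEquiv.sumPiEquivProdPi
        (fun _ : Fin n' ⊕ Fin k => ℝ)).symm.measurableEmbedding
  have hkey1 : ∀ (p : (Fin n' → ℝ) × (Fin k → ℝ)) (i : Fin n'),
      φ p (e (Sum.inl i)) = p.1 i := by
    intro p i
    rw [hφ]
    have h := Equiv.piCongrLeft_sumInl (fun _ : Fin N => ℝ) e p.1 p.2 i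
    rw [Prod.mk.eta] at h
    exact h
  have hkey2 : ∀ (p : (Fin n' → ℝ) × (Fin k → ℝ)) (i : Fin k),
      φ p (e (Sum.inr i)) = p.2 i := by
    intro p i
    rw [hφ]
    have h := Equiv.piCongrLeft_sumInr (fun _ : Fin N => ℝ) e p.1 p.2 i
    rw [Prod.mk.eta] at h
    exact h
  have hpre : φ ⁻¹' (cube N) = (cube n') ×ˢ (cube k) := by
    ext p
    simp only [Set.mem_preimage, Set.mem_prod, mem_cube]
    constructor
    · intro hp
      constructor
      · intro i
        have h := hp (e (Sum.inl i))
        rwa [hkey1 p i] at h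
      · intro i
        have h := hp (e (Sum.inr i))
        rwa [hkey2 p i] at h
    · rintro ⟨ha, hb⟩ j
      obtain ⟨s, rfl⟩ := e.surjective j
      cases s with
      | inl i => rw [hkey1 p i]; exact ha i
      | inr i => rw [hkey2 p i]; exact hb i
  have hint1 : ∫ t in cube N, g (fun i => t (e (Sum.inl i))) =
      ∫ p in φ ⁻¹' (cube N), g (fun i => φ p (e (Sum.inl i))) :=
    (hmp.setIntegral_preimage_emb hemb
      (fun t => g (fun i => t (e (Sum.inl i)))) (cube N)).symm
  have hint2 : (fun p : (Fin n' → ℝ) × (Fin k → ℝ) => g (fun i => φ p (e (Sum.inl i)))) =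
      fun p => g p.1 := by
    funext p
    congr 1
    funext i
    rw [hkey1 p i]
  have hmapfst : Measure.map Prod.fst
      ((volume.restrict (cube n')).prod (volume.restrict (cube k))) =
        volume.restrict (cube n') := by
    rw [Measure.map_fst_prod, Measure.restrict_apply_univ, volume_cube, one_smul]
  rw [hint1, hpre, hint2]
  have hv : (volume : Measure ((Fin n' → ℝ) × (Fin k → ℝ))) =
      (volume : Measure (Fin n' → ℝ)).prod (volume : Measure (Fin k → ℝ)) :=
    Measure.volume_eq_prod _ _
  rw [hv, ← Measure.prod_restrict]
  have hmi := integral_map (φ := (Prod.fst : ((Fin n' → ℝ) × (Fin k → ℝ)) → (Fin n' → ℝ)))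
    (μ := (volume.restrict (cube n')).prod (volume.restrict (cube k)))
    measurable_fst.aemeasurable (f := g) (by rw [hmapfst]; exact hg)
  rw [hmapfst] at hmi
  exact hmi.symm

end BOaux

namespace BOaux

/-- Main construction: padding/raising an instance to one with at least `K` values, all
at least `f 1`, without decreasing the regret. -/
lemma key (f : ℝ → ℝ) (K : ℕ) (hK1 : 1 ≤ K)
    (hcont : ContinuousOn f (Set.Icc 0 1)) (hanti : StrictAntiOn f (Set.Icc 0 1))
    (hmap : ∀ t ∈ Set.Icc (0 : ℝ) 1, f t ∈ Set.Icc (0 : ℝ) 1)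
    (n : ℕ) (x : Fin (n + 1) → ℝ) (hx : Antitone x) (hx1 : x 0 ≤ 1) :
    ∃ (m : ℕ) (y : Fin (m + 1) → ℝ), K ≤ m + 1 ∧ Antitone y ∧ y 0 ≤ 1 ∧
      f 1 ≤ y (Fin.last m) ∧ bestOnlyRegret f x ≤ bestOnlyRegret f y := by
  set c := f 1 with hc
  have h01 : (1 : ℝ) ∈ Set.Icc (0 : ℝ) 1 := ⟨zero_le_one, le_rfl⟩
  have hc1 : c ≤ 1 := (hmap 1 h01).2
  have hfs : ∀ s : ℝ, 0 ≤ s → s < 1 → c < f s := fun s h0 h1 =>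
    hanti ⟨h0, h1.le⟩ h01 h1
  set m := n + K with hm
  set y : Fin (m + 1) → ℝ :=
    fun i => if h2 : (i : ℕ) < n + 1 then max (x ⟨i, h2⟩) c else c with hydef
  have hy : ∀ i : Fin (m + 1),
      y i = if h2 : (i : ℕ) < n + 1 then max (x ⟨i, h2⟩) c else c := fun _ => rfl
  have hyanti : Antitone y := by
    intro i j hij
    have hvij : (i : ℕ) ≤ (j : ℕ) := hij
    by_cases hj : (j : ℕ) < n + 1
    · have hi : (i : ℕ) < n + 1 := lt_of_le_of_lt hvij hj
      rw [hy i, hy j, dif_pos hi, dif_pos hj]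
      exact max_le_max (hx (Fin.mk_le_mk.2 hvij)) le_rfl
    · rw [hy j, dif_neg hj]
      by_cases hi : (i : ℕ) < n + 1
      · rw [hy i, dif_pos hi]
        exact le_max_right _ _
      · rw [hy i, dif_neg hi]
  have hy0 : y 0 = max (x 0) c := by
    have h2 : ((0 : Fin (m + 1)) : ℕ) < n + 1 := by simp
    rw [hy, dif_pos h2]
    have h3 : (⟨((0 : Fin (m + 1)) : ℕ), h2⟩ : Fin (n + 1)) = 0 := Fin.ext (by simp)
    rw [h3]
  have hylast : y (Fin.last m) = c := by
    rw [hy, dif_neg (by simp only [Fin.val_last]; omega)]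
  have hle : n + 1 ≤ m + 1 := by omega
  set e : Fin (n + 1) ⊕ Fin K ≃ Fin (m + 1) :=
    finSumFinEquiv.trans (finCongr (by omega)) with he
  have hcast : ∀ i : Fin (n + 1), e (Sum.inl i) = Fin.castLE hle i := by
    intro i
    ext
    simp [he, finCongr_apply]
  set F : ℝ → ℝ := fun s => f (max 0 (min 1 s)) with hF
  have hFcont : Continuous F := by
    refine hcont.comp_continuous
      (continuous_const.max (continuous_const.min continuous_id)) fun s => ?_
    rw [Set.mem_Icc]
    exact ⟨le_max_left _ _, max_le zero_le_one (min_le_left _ _)⟩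
  have hFeq : ∀ s : ℝ, 0 ≤ s → s ≤ 1 → F s = f s := by
    intro s h0 h1
    rw [hF]
    simp only [min_eq_right h1, max_eq_right h0]
  have hgmeas : AEStronglyMeasurable (bestOnlyReceived f x)
      (volume.restrict (cube (n + 1))) := by
    have hGmeas : Measurable
        (fun s : Fin (n + 1) → ℝ => ∑ i, (Win F x i).indicator (fun _ => x i) s) := by
      apply Finset.measurable_sum
      intro i _
      exact Measurable.indicator measurable_const (measurable_win hFcont.measurable x i)
    refine hGmeas.aestronglyMeasurable.congr ?_
    filter_upwards [ae_restrict_mem (cube_measurableSet (n + 1)), ae_generic (n + 1)]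
      with t htc htg
    exact (recv_eq_sum f F x t
      (fun i => hFeq _ (mem_cube.1 htc i).1 (mem_cube.1 htc i).2) htg.1).symm
  have hIeq : ∫ t in cube (m + 1), bestOnlyReceived f y t
      = ∫ u in cube (n + 1), bestOnlyReceived f x u := by
    have h1 : ∫ t in cube (m + 1), bestOnlyReceived f y t
        = ∫ t in cube (m + 1), bestOnlyReceived f x (fun i => t (e (Sum.inl i))) := by
      apply integral_congr_ae
      filter_upwards [ae_restrict_mem (cube_measurableSet (m + 1)), ae_generic (m + 1)]
        with t htc htg
      have hcore := core hle f c hfs x y hy t (fun i => (mem_cube.1 htc i).1) htg.2 htg.1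
      have harg : (t ∘ Fin.castLE hle) = fun i => t (e (Sum.inl i)) :=
        funext fun i => (congrArg t (hcast i)).symm
      rw [hcore, harg]
    rw [h1]
    exact pad_integral e (bestOnlyReceived f x) hgmeas
  have hx0' : x 0 ≤ y 0 := by
    rw [hy0]
    exact le_max_left _ _
  refine ⟨m, y, by omega, hyanti, by rw [hy0]; exact max_le hx1 hc1, by rw [hylast], ?_⟩
  have hry : bestOnlyRegret f y = y 0 - ∫ t in cube (m + 1), bestOnlyReceived f y t := rfl
  have hrx : bestOnlyRegret f x = x 0 - ∫ t in cube (n + 1), bestOnlyReceived f x t := rfl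
  rw [hry, hrx, hIeq]
  linarith

end BOaux

/-- For a continuous, strictly decreasing threshold `f : [0,1] → [0,1]` with `f 0 = 1` and
any integer `K ≥ 10`, the supremum of the regret of the best-only pricing curve over all
instances (`n ≥ 1` values in `[0,1]`, sorted decreasingly) equals the supremum restricted
to instances with at least `K` values whose smallest value is at least `f 1`. -/
theorem bestOnly_regret_sup_restrict (f : ℝ → ℝ) (K : ℕ) (hK : 10 ≤ K)
    (hcont : ContinuousOn f (Set.Icc 0 1)) (hanti : StrictAntiOn f (Set.Icc 0 1))
    (hf0 : f 0 = 1) (hmap : ∀ t ∈ Set.Icc (0 : ℝ) 1, f t ∈ Set.Icc (0 : ℝ) 1) :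
    sSup {r : ℝ | ∃ (n : ℕ) (x : Fin (n + 1) → ℝ),
        Antitone x ∧ x 0 ≤ 1 ∧ 0 ≤ x (Fin.last n) ∧ r = bestOnlyRegret f x}
      = sSup {r : ℝ | ∃ (n : ℕ) (x : Fin (n + 1) → ℝ),
        K ≤ n + 1 ∧ Antitone x ∧ x 0 ≤ 1 ∧ f 1 ≤ x (Fin.last n) ∧ r = bestOnlyRegret f x} := by
  have h01 : (1 : ℝ) ∈ Set.Icc (0 : ℝ) 1 := ⟨zero_le_one, le_rfl⟩
  have hc0 : 0 ≤ f 1 := (hmap 1 h01).1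
  have hc1 : f 1 ≤ 1 := (hmap 1 h01).2
  set S1 := {r : ℝ | ∃ (n : ℕ) (x : Fin (n + 1) → ℝ),
      Antitone x ∧ x 0 ≤ 1 ∧ 0 ≤ x (Fin.last n) ∧ r = bestOnlyRegret f x} with hS1
  set S2 := {r : ℝ | ∃ (n : ℕ) (x : Fin (n + 1) → ℝ),
      K ≤ n + 1 ∧ Antitone x ∧ x 0 ≤ 1 ∧ f 1 ≤ x (Fin.last n) ∧ r = bestOnlyRegret f x}
    with hS2
  have hsub : S2 ⊆ S1 := by
    rintro r ⟨n, x, hKn, hx, hx1, hxf, hr⟩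
    exact ⟨n, x, hx, hx1, le_trans hc0 hxf, hr⟩
  have hb1 : ∀ r ∈ S1, r ≤ 1 := by
    rintro r ⟨n, x, hx, hx1, hx0, rfl⟩
    exact BOaux.regret_le_one f x hx1 fun i => le_trans hx0 (hx (Fin.le_last i))
  have hbdd1 : BddAbove S1 := ⟨1, fun r hr => hb1 r hr⟩
  have hbdd2 : BddAbove S2 := ⟨1, fun r hr => hb1 r (hsub hr)⟩
  have hne2 : S2.Nonempty :=
    ⟨bestOnlyRegret f (fun _ : Fin ((K - 1) + 1) => 1),
      K - 1, fun _ => 1, by omega, antitone_const, le_rfl, hc1, rfl⟩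
  have hne1 : S1.Nonempty := hne2.mono hsub
  apply le_antisymm
  · refine csSup_le hne1 ?_
    rintro r ⟨n, x, hx, hx1, hx0, rfl⟩
    obtain ⟨m, y, hKm, hya, hy1, hyf, hreg⟩ :=
      BOaux.key f K (by omega) hcont hanti hmap n x hx hx1
    calc bestOnlyRegret f x ≤ bestOnlyRegret f y := hreg
      _ ≤ sSup S2 := le_csSup hbdd2 ⟨m, y, hKm, hya, hy1, hyf, rfl⟩
  · exact csSup_le_csSup hbdd1 hne2 hsub
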